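/- A monic polynomial with integer coefficients all of whose complex roots lie in the closed unit disk factors as a product of cyclotomic polynomials and a power of T; equivalently, every nonzero root is a root of unity. -/

import Mathlib

private lemma multiset_prod_le_one (M : Multiset ℝ) (h0 : ∀ x ∈ M, 0 ≤ x)
    (h1 : ∀ x ∈ M, x ≤ 1) : M.prod ≤ 1 := by
  induction M using Multiset.induction with
  | empty => simp
  | cons a M ih =>
    rw [Multiset.prod_cons]
    have ha0 := h0 a (Multiset.mem_cons_self a M)
    have ha1 := h1 a (Multiset.mem_cons_self a M)
    have hM : M.prod ≤ 1 := ih (fun x hx => h0 x (Multiset.mem_cons_of_mem hx))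
      (fun x hx => h1 x (Multiset.mem_cons_of_mem hx))
    have hM0 : 0 ≤ M.prod := Multiset.prod_nonneg
      (fun x hx => h0 x (Multiset.mem_cons_of_mem hx))
    calc a * M.prod ≤ 1 * 1 := mul_le_mul ha1 hM hM0 zero_le_one
    _ = 1 := one_mul 1

private lemma multiset_all_eq_one (M : Multiset ℝ) (h0 : ∀ x ∈ M, 0 ≤ x)
    (h1 : ∀ x ∈ M, x ≤ 1) (hp : 1 ≤ M.prod) : ∀ x ∈ M, x = 1 := by
  induction M using Multiset.induction with
  | empty => simp
  | cons a M ih =>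
    rw [Multiset.prod_cons] at hp
    have ha0 := h0 a (Multiset.mem_cons_self a M)
    have ha1 := h1 a (Multiset.mem_cons_self a M)
    have hM : M.prod ≤ 1 := multiset_prod_le_one M
      (fun x hx => h0 x (Multiset.mem_cons_of_mem hx))
      (fun x hx => h1 x (Multiset.mem_cons_of_mem hx))
    have ha : a = 1 := le_antisymm ha1 (by nlinarith)
    have hp' : 1 ≤ M.prod := by nlinarith
    intro x hx
    rcases Multiset.mem_cons.mp hx with rfl | hx
    · exact ha
    · exact ih (fun y hy => h0 y (Multiset.mem_cons_of_mem hy))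
        (fun y hy => h1 y (Multiset.mem_cons_of_mem hy)) hp' x hx

set_option maxHeartbeats 2000000 in
/-- Kronecker's theorem: a monic integer polynomial all of whose complex roots
lie in the closed unit disk has every nonzero root a root of unity. -/
theorem kronecker_roots_of_unity (f : Polynomial ℤ) (hf : f.Monic)
    (hroots : ∀ z : ℂ, Polynomial.aeval z f = 0 → ‖z‖ ≤ 1) :
    ∀ z : ℂ, Polynomial.aeval z f = 0 → z ≠ 0 → ∃ k : ℕ, 0 < k ∧ z ^ k = 1 := by
  intro z hfz hz0
  have hz : IsIntegral ℤ z := ⟨f, hf, hfz⟩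
  set p := minpoly ℤ z with hp
  have hpmonic : p.Monic := minpoly.monic hz
  have hpdvd : p ∣ f := minpoly.isIntegrallyClosed_dvd hz hfz
  set g := p.map (algebraMap ℤ ℂ) with hg
  have hgmonic : g.Monic := hpmonic.map _
  have hgne : g ≠ 0 := hgmonic.ne_zero
  -- every root of g is a root of f, hence has abs ≤ 1
  have hroots_le : ∀ w ∈ g.roots, ‖w‖ ≤ 1 := by
    intro w hw
    have hw' : Polynomial.aeval w p = 0 := by
      have := Polynomial.isRoot_of_mem_roots hw
      rwa [Polynomial.IsRoot, Polynomial.eval_map, ← Polynomial.aeval_def] at this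
    apply hroots
    obtain ⟨q, hq⟩ := hpdvd
    rw [hq, map_mul, hw', zero_mul]
  -- the product of the absolute values of the roots equals |p.coeff 0| ≥ 1
  have hsplits : g.Splits := IsAlgClosed.splits _
  have hprod := hsplits.coeff_zero_eq_prod_roots_of_monic hgmonic
  have hc0 : p.coeff 0 ≠ 0 := by
    intro h
    have hXdvd : Polynomial.X ∣ p := Polynomial.X_dvd_iff.mpr h
    have haev : Polynomial.aeval z p = 0 := by rw [hp]; exact minpoly.aeval ℤ z
    obtain ⟨q, hq⟩ := hXdvd
    have hirr : Irreducible p := minpoly.irreducible hz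
    rcases hirr.isUnit_or_isUnit hq with hu | hu
    · exact Polynomial.not_isUnit_X hu
    · rw [hq, map_mul, Polynomial.aeval_X] at haev
      rcases mul_eq_zero.mp haev with h' | h'
      · exact hz0 h'
      · exact (hu.map (Polynomial.aeval z)).ne_zero h' 
  have habs : (g.roots.map (‖·‖)).prod = |(p.coeff 0 : ℤ)| := by
    have h1 : ‖g.roots.prod‖ = (g.roots.map (‖·‖)).prod := by
      exact map_multiset_prod (normHom : ℂ →*₀ ℝ) g.roots
    have h2 : g.coeff 0 = ((p.coeff 0 : ℤ) : ℂ) := by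
      simp [hg, Polynomial.coeff_map]
    have hneg : ‖(-1 : ℂ)‖ = 1 := by simp
    have key : ‖g.coeff 0‖ = (g.roots.map (‖·‖)).prod := by
      rw [hprod, norm_mul, norm_pow, hneg, one_pow, one_mul, h1]
    rw [← key, h2, Complex.norm_intCast, Int.cast_abs]
  have hge1 : (1 : ℝ) ≤ (g.roots.map (‖·‖)).prod := by
    rw [habs]
    exact_mod_cast Int.one_le_abs hc0
  have habs_one : ∀ w ∈ g.roots, ‖w‖ = 1 := by
    intro w hw
    exact multiset_all_eq_one _ (fun x hx => by
        obtain ⟨w', hw', rfl⟩ := Multiset.mem_map.mp hx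
        exact norm_nonneg _)
      (fun x hx => by
        obtain ⟨w', hw', rfl⟩ := Multiset.mem_map.mp hx
        exact hroots_le w' hw') hge1 _ (Multiset.mem_map_of_mem _ hw)
  -- now work in the number field K = ℚ(z)
  have hzQ : IsIntegral ℚ z := hz.tower_top
  set K := IntermediateField.adjoin ℚ ({z} : Set ℂ) with hK
  haveI : FiniteDimensional ℚ K := IntermediateField.adjoin.finiteDimensional hzQ
  haveI : NumberField K := ⟨⟩
  set x : K := ⟨z, IntermediateField.mem_adjoin_simple_self ℚ z⟩ with hx
  have hxz : algebraMap K ℂ x = z := rfl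
  have hinj : Function.Injective (algebraMap K ℂ) := (algebraMap K ℂ).injective
  have hx_int : IsIntegral ℤ x := by
    rw [← isIntegral_algebraMap_iff hinj, hxz]; exact hz
  have hminx : minpoly ℤ x = p := by
    rw [hp, ← hxz, minpoly.algebraMap_eq hinj]
  have hnorm : ∀ φ : K →+* ℂ, ‖φ x‖ = 1 := by
    intro φ
    have hmem : φ x ∈ (minpoly ℚ x).rootSet ℂ := by
      rw [← NumberField.Embeddings.range_eval_eq_rootSet_minpoly K ℂ x]
      exact ⟨φ, rfl⟩
    have hq : minpoly ℚ x = (minpoly ℤ x).map (algebraMap ℤ ℚ) :=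
      minpoly.isIntegrallyClosed_eq_field_fractions' ℚ hx_int
    have haev : Polynomial.aeval (φ x) p = 0 := by
      have := (Polynomial.mem_rootSet.mp hmem).2
      rwa [hq, hminx, Polynomial.aeval_map_algebraMap] at this
    have hroot : φ x ∈ g.roots := by
      rw [Polynomial.mem_roots hgne]
      rwa [Polynomial.IsRoot, Polynomial.eval_map, ← Polynomial.aeval_def]
    exact habs_one _ hroot
  obtain ⟨n, hn, hxn⟩ := NumberField.Embeddings.pow_eq_one_of_norm_eq_one K ℂ hx_int hnorm
  refine ⟨n, hn, ?_⟩
  have := congrArg (algebraMap K ℂ) hxn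
  rwa [map_pow, hxz, map_one] at this
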